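/- arXiv:2210.13275 — 2 statements merged into one kernel-verified Lean document; each statement's English description precedes it below -/
import Mathlib

section
/- Let $(Z_i)$ be strictly stationary with $Z_1$ regularly varying with index $\alpha\in(0,1)$, and let $(a_n)$ satisfy $n\Pr(|Z_1|>a_n)\to 1$. Then for every $\epsilon>0$, $\lim_{u\downarrow 0}\limsup_{n\to\infty}\Pr\big[\max_{1\le k\le n}\big|\sum_{i=1}^{k}\big(\tfrac{Z_i}{a_n}1_{\{|Z_i|\le u a_n\}}-\mathrm{E}(\tfrac{Z_1}{a_n}1_{\{|Z_1|\le u a_n\}})\big)\big|>\epsilon\big]=0$. -/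
open MeasureTheory ProbabilityTheory Filter Set Topology

noncomputable section

lemma exists_pow_two_between (r : ℝ) (hr : 1 ≤ r) : ∃ K : ℕ, r ≤ 2 ^ K ∧ (2:ℝ) ^ K ≤ 2 * r := by
  classical
  have h : ∃ K : ℕ, r ≤ 2 ^ K := by
    obtain ⟨K, hK⟩ := pow_unbounded_of_one_lt r (by norm_num : (1:ℝ) < 2)
    exact ⟨K, hK.le⟩
  refine ⟨Nat.find h, Nat.find_spec h, ?_⟩
  rcases Nat.eq_zero_or_pos (Nat.find h) with h0 | hpos
  · rw [h0]; norm_num; linarith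
  · have hmin : ¬ r ≤ 2 ^ (Nat.find h - 1) := Nat.find_min h (Nat.sub_lt hpos one_pos)
    push_neg at hmin
    have : (2:ℝ) ^ Nat.find h = 2 * 2 ^ (Nat.find h - 1) := by
      rw [← pow_succ']
      congr 1
      omega
    rw [this]
    nlinarith

lemma geom_bound (q : ℝ) (h0 : 0 ≤ q) (h1 : q < 1) (K : ℕ) :
    ∑ j ∈ Finset.range K, q ^ j ≤ 1 / (1 - q) := by
  have h1q : 0 < 1 - q := by linarith
  have heq : ∑ j ∈ Finset.range K, q ^ j = (1 - q ^ K) / (1 - q) := by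
    rw [geom_sum_eq (ne_of_lt h1)]
    rw [div_eq_div_iff (by linarith) (by linarith)]
    ring
  rw [heq]
  gcongr
  nlinarith [pow_nonneg h0 K]

/-- `L` is slowly varying at infinity. -/
def SlowlyVarying (L : ℝ → ℝ) : Prop :=
  (∀ x > (0:ℝ), 0 < L x) ∧ ∀ t > (0:ℝ), Tendsto (fun x => L (t * x) / L x) atTop (nhds 1)

/-- Strict stationarity: the joint law of the sequence is invariant under shifts. -/
def StrictlyStationary {Ω : Type*} [MeasureSpace Ω] (Z : ℤ → Ω → ℝ) : Prop :=
  ∀ k : ℤ, IdentDistrib (fun ω (i : ℤ) => Z (i + k) ω) (fun ω (i : ℤ) => Z i ω)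
    (ℙ : Measure Ω) (ℙ : Measure Ω)

set_option maxHeartbeats 4000000 in
/-- vanishing of small truncated centered sums, `α ∈ (0,1)`. -/
theorem stmt3 {Ω : Type*} [MeasureSpace Ω] [IsProbabilityMeasure (ℙ : Measure Ω)]
    (Z : ℤ → Ω → ℝ) (hZm : ∀ i, Measurable (Z i)) (hstat : StrictlyStationary Z)
    (α : ℝ) (hα : α ∈ Set.Ioo (0:ℝ) 1) (L : ℝ → ℝ) (hL : SlowlyVarying L)
    (htail : ∀ x > (0:ℝ), (ℙ : Measure Ω) {ω | x < |Z 1 ω|} = ENNReal.ofReal (x ^ (-α) * L x))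
    (a : ℕ → ℝ) (ha : ∀ n, 0 < a n)
    (hna : Tendsto (fun n : ℕ => (n : ℝ) * ((ℙ : Measure Ω) {ω | a n < |Z 1 ω|}).toReal)
      atTop (nhds 1))
    (ε : ℝ) (hε : 0 < ε) :
    Tendsto (fun u : ℝ =>
        Filter.limsup (fun n : ℕ =>
          ((ℙ : Measure Ω) {ω | ∃ k ∈ Finset.Icc 1 n, ε <
              |∑ i ∈ Finset.Icc 1 k,
                ((if |Z (i : ℤ) ω| ≤ u * a n then Z (i : ℤ) ω / a n else 0)
                  - ∫ x : Ω, (if |Z 1 x| ≤ u * a n then Z 1 x / a n else 0)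
                      ∂(ℙ : Measure Ω))|}).toReal) atTop)
      (nhdsWithin 0 (Set.Ioi 0)) (nhds 0) := by
  obtain ⟨hα0, hα1⟩ := hα
  set T : ℝ → ℝ := fun x => ((ℙ : Measure Ω) {ω | x < |Z 1 ω|}).toReal with hTdef
  have hna' : Tendsto (fun n : ℕ => (n : ℝ) * T (a n)) atTop (nhds 1) := by
    simp only [hTdef]; exact hna
  have hTnn : ∀ x, 0 ≤ T x := fun x => ENNReal.toReal_nonneg
  have hT1 : ∀ x, T x ≤ 1 := fun x => by
    simpa using ENNReal.toReal_mono ENNReal.one_ne_top prob_le_one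
  have hTanti : Antitone T := fun x y hxy =>
    ENNReal.toReal_mono (measure_ne_top _ _)
      (measure_mono fun ω hω => lt_of_le_of_lt hxy hω)
  have hTval : ∀ x, 0 < x → T x = x ^ (-α) * L x := by
    intro x hx
    simp only [hTdef]
    rw [htail x hx, ENNReal.toReal_ofReal
      (mul_nonneg (Real.rpow_nonneg hx.le _) (hL.1 x hx).le)]
  have hTpos : ∀ x, 0 < x → 0 < T x := by
    intro x hx
    rw [hTval x hx]
    exact mul_pos (Real.rpow_pos_of_pos hx _) (hL.1 x hx)
  have hTa0 : Tendsto (fun n : ℕ => T (a n)) atTop (nhds 0) := by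
    have h1 : Tendsto (fun n : ℕ => ((n:ℝ) * T (a n)) * (n:ℝ)⁻¹) atTop (nhds (1 * 0)) :=
      hna'.mul tendsto_inv_atTop_nhds_zero_nat
    rw [one_mul] at h1
    apply h1.congr'
    filter_upwards [eventually_ge_atTop 1] with n hn
    have hn0 : (n:ℝ) ≠ 0 := Nat.cast_ne_zero.2 (by omega)
    field_simp
  have haT : Tendsto a atTop atTop := by
    rw [tendsto_atTop]
    intro M
    have hM' : (0:ℝ) < max M 1 := lt_of_lt_of_le one_pos (le_max_right _ _)
    have hpos := hTpos _ hM'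
    filter_upwards [hTa0.eventually_lt_const hpos] with n hn
    by_contra h
    push_neg at h
    have : T (max M 1) ≤ T (a n) :=
      hTanti (le_of_lt (lt_of_lt_of_le h (le_max_left _ _)))
    linarith
  have hratio : ∀ c : ℝ, 0 < c →
      Tendsto (fun n : ℕ => (n:ℝ) * T (c * a n)) atTop (nhds (c ^ (-α))) := by
    intro c hc
    have hLr : Tendsto (fun n : ℕ => L (c * a n) / L (a n)) atTop (nhds 1) :=
      (hL.2 c hc).comp haT
    have hmain : Tendsto (fun n : ℕ =>
        ((n:ℝ) * T (a n)) * (c ^ (-α) * (L (c * a n) / L (a n)))) atTop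
        (nhds (1 * (c ^ (-α) * 1))) :=
      hna'.mul (tendsto_const_nhds.mul hLr)
    rw [one_mul, mul_one] at hmain
    apply hmain.congr'
    filter_upwards [] with n
    have han : 0 < a n := ha n
    have hLa : L (a n) ≠ 0 := ne_of_gt (hL.1 _ han)
    rw [hTval _ han, hTval _ (mul_pos hc han), Real.mul_rpow hc.le han.le]
    field_simp
  -- Potter-type bound
  set α' : ℝ := (1 + α) / 2 with hα'def
  have hαα' : α < α' := by rw [hα'def]; linarith
  have hα'1 : α' < 1 := by rw [hα'def]; linarith
  have hα'0 : 0 < α' := by rw [hα'def]; linarith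
  have hdouble : ∀ᶠ x in atTop, T x ≤ 2 ^ α' * T (2 * x) := by
    have h2 : Tendsto (fun x => L (2 * x) / L x) atTop (nhds 1) := hL.2 2 (by norm_num)
    have hinv : Tendsto (fun x : ℝ => L x / L (2 * x)) atTop (nhds 1) := by
      simpa [inv_div] using h2.inv₀ one_ne_zero
    have hq : Tendsto (fun x : ℝ => (2:ℝ) ^ α * (L x / L (2 * x))) atTop
        (nhds ((2:ℝ) ^ α)) := by
      simpa using (tendsto_const_nhds (x := (2:ℝ)^α)).mul hinv
    have hlt : (2:ℝ) ^ α < 2 ^ α' := (Real.rpow_lt_rpow_left_iff one_lt_two).2 hαα'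
    filter_upwards [hq.eventually_lt_const hlt, eventually_ge_atTop (1:ℝ)] with x hx hx1
    have hx0 : (0:ℝ) < x := lt_of_lt_of_le one_pos hx1
    have h2x0 : (0:ℝ) < 2 * x := by linarith
    have hL2 : 0 < L (2 * x) := hL.1 _ h2x0
    have hLx : 0 < L x := hL.1 _ hx0
    have key : L x ≤ 2 ^ α' * 2 ^ (-α) * L (2 * x) := by
      have h2a : (0:ℝ) < 2 ^ α := Real.rpow_pos_of_pos two_pos α
      have hna2 : (2:ℝ) ^ (-α) = (2 ^ α)⁻¹ := Real.rpow_neg two_pos.le α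
      rw [hna2]
      rw [mul_comm] at hx
      have hx' : L x / L (2 * x) ≤ 2 ^ α' / 2 ^ α := by
        rw [le_div_iff₀ h2a]; exact hx.le
      calc L x = (L x / L (2 * x)) * L (2 * x) := by field_simp
        _ ≤ (2 ^ α' / 2 ^ α) * L (2 * x) := by
            apply mul_le_mul_of_nonneg_right hx' hL2.le
        _ = 2 ^ α' * (2 ^ α)⁻¹ * L (2 * x) := by ring
    rw [hTval _ hx0, hTval _ h2x0, Real.mul_rpow two_pos.le hx0.le]
    calc x ^ (-α) * L x ≤ x ^ (-α) * (2 ^ α' * 2 ^ (-α) * L (2 * x)) :=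
          mul_le_mul_of_nonneg_left key (Real.rpow_nonneg hx0.le _)
      _ = 2 ^ α' * (2 ^ (-α) * x ^ (-α) * L (2 * x)) := by ring
  obtain ⟨x1, hx1⟩ := eventually_atTop.1 hdouble
  set x0 : ℝ := max x1 1 with hx0def
  have hx01 : (1:ℝ) ≤ x0 := le_max_right _ _
  have hx0pos : (0:ℝ) < x0 := lt_of_lt_of_le one_pos hx01
  have hdbl : ∀ x, x0 ≤ x → T x ≤ 2 ^ α' * T (2 * x) :=
    fun x hx => hx1 x (le_trans (le_max_left _ _) hx)
  have hiter : ∀ k : ℕ, ∀ y, x0 ≤ y → T y ≤ (2 ^ α') ^ k * T (2 ^ k * y) := by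
    intro k
    induction k with
    | zero => intro y _; simp
    | succ k ih =>
      intro y hy
      have hy0 : 0 < y := lt_of_lt_of_le hx0pos hy
      have harg : (2:ℝ) ^ (k+1) * y = 2 ^ k * (2 * y) := by ring
      rw [harg, pow_succ']
      calc T y ≤ 2 ^ α' * T (2 * y) := hdbl y hy
        _ ≤ 2 ^ α' * ((2 ^ α') ^ k * T (2 ^ k * (2 * y))) := by
            apply mul_le_mul_of_nonneg_left
              (ih (2 * y) (le_trans hy (by linarith)))
              (Real.rpow_nonneg two_pos.le _)
        _ = 2 ^ α' * (2 ^ α') ^ k * T (2 ^ k * (2 * y)) := by ring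
  have hPot : ∀ y x, x0 ≤ y → y ≤ x → T y ≤ 2 * (x / y) ^ α' * T x := by
    intro y x hy hyx
    have hy0 : 0 < y := lt_of_lt_of_le hx0pos hy
    have hr1 : 1 ≤ x / y := (one_le_div hy0).2 hyx
    obtain ⟨K, hK1, hK2⟩ := exists_pow_two_between (x / y) hr1
    have h1 : T y ≤ (2 ^ α') ^ K * T (2 ^ K * y) := hiter K y hy
    have h2 : T (2 ^ K * y) ≤ T x := by
      apply hTanti
      rw [div_le_iff₀ hy0] at hK1
      exact hK1
    have h3 : ((2:ℝ) ^ α') ^ K ≤ 2 * (x / y) ^ α' := by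
      have he : ((2:ℝ) ^ α') ^ K = ((2:ℝ) ^ K) ^ α' := by
        rw [← Real.rpow_natCast ((2:ℝ) ^ α') K, ← Real.rpow_mul two_pos.le,
          ← Real.rpow_natCast (2:ℝ) K, ← Real.rpow_mul two_pos.le, mul_comm]
      rw [he]
      have h2a : (2:ℝ) ^ α' ≤ 2 := by
        calc (2:ℝ) ^ α' ≤ 2 ^ (1:ℝ) :=
              Real.rpow_le_rpow_of_exponent_le one_le_two hα'1.le
          _ = 2 := Real.rpow_one 2
      calc ((2:ℝ) ^ K) ^ α' ≤ (2 * (x / y)) ^ α' :=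
            Real.rpow_le_rpow (by positivity) hK2 hα'0.le
        _ = 2 ^ α' * (x / y) ^ α' := Real.mul_rpow two_pos.le (by positivity)
        _ ≤ 2 * (x / y) ^ α' :=
            mul_le_mul_of_nonneg_right h2a (Real.rpow_nonneg (by positivity) _)
    calc T y ≤ (2 ^ α') ^ K * T (2 ^ K * y) := h1
      _ ≤ (2 ^ α') ^ K * T x := mul_le_mul_of_nonneg_left h2 (by positivity)
      _ ≤ 2 * (x / y) ^ α' * T x := mul_le_mul_of_nonneg_right h3 (hTnn x)
  -- n / a_n → 0
  have hTx0pos : 0 < T x0 := hTpos _ hx0pos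
  have hTlow : ∀ x, x0 ≤ x → (x0 ^ α' * T x0 / 2) * x ^ (1 - α') ≤ x * T x := by
    intro x hx
    have hx' : 0 < x := lt_of_lt_of_le hx0pos hx
    have h := hPot x0 x le_rfl hx
    have e : x0 ^ α' * (2 * (x / x0) ^ α' * T x) = 2 * (x ^ α' * T x) := by
      rw [Real.div_rpow hx'.le hx0pos.le]
      have : x0 ^ α' ≠ 0 := ne_of_gt (Real.rpow_pos_of_pos hx0pos _)
      field_simp
    have h' := mul_le_mul_of_nonneg_left h (Real.rpow_nonneg hx0pos.le α')
    rw [e] at h'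
    have hx1' : x ^ (1 - α') * x ^ α' = x := by
      rw [← Real.rpow_add hx']; norm_num
    calc (x0 ^ α' * T x0 / 2) * x ^ (1 - α')
        ≤ (2 * (x ^ α' * T x) / 2) * x ^ (1 - α') := by
          apply mul_le_mul_of_nonneg_right _ (Real.rpow_nonneg hx'.le _)
          linarith
      _ = x ^ (1 - α') * x ^ α' * T x := by ring
      _ = x * T x := by rw [hx1']
  have haTT : Tendsto (fun n : ℕ => a n * T (a n)) atTop atTop := by
    have hc0 : 0 < x0 ^ α' * T x0 / 2 := by
      have := Real.rpow_pos_of_pos hx0pos α'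
      positivity
    have hf : Tendsto (fun n : ℕ => (x0 ^ α' * T x0 / 2) * (a n) ^ (1 - α'))
        atTop atTop := by
      apply Tendsto.const_mul_atTop hc0
      exact (tendsto_rpow_atTop (by linarith)).comp haT
    apply tendsto_atTop_mono' atTop _ hf
    filter_upwards [haT.eventually_ge_atTop x0] with n hn
    exact hTlow _ hn
  have hna0 : Tendsto (fun n : ℕ => (n:ℝ) / a n) atTop (nhds 0) := by
    have h1 : Tendsto (fun n : ℕ => ((n:ℝ) * T (a n)) * (a n * T (a n))⁻¹) atTop
        (nhds (1 * 0)) := hna'.mul haTT.inv_tendsto_atTop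
    rw [one_mul] at h1
    apply h1.congr'
    filter_upwards [] with n
    have h2 : 0 < T (a n) := hTpos _ (ha n)
    have h3 : a n ≠ 0 := (ha n).ne'
    field_simp
  -- constants
  set q : ℝ := 2 ^ (α' - 1) with hqdef
  have hq0 : 0 < q := Real.rpow_pos_of_pos two_pos _
  have hq1 : q < 1 := Real.rpow_lt_one_of_one_lt_of_neg one_lt_two (by linarith)
  have h2q : 2 * q = 2 ^ α' := by
    rw [hqdef]
    nth_rewrite 1 [← Real.rpow_one (2:ℝ)]
    rw [← Real.rpow_add two_pos]
    norm_num
  set C : ℝ := 4 / (1 - q) with hCdef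
  have hC0 : 0 < C := div_pos four_pos (by linarith)
  -- moment bound
  have hmom : ∀ t, 2 * x0 ≤ t →
      (∫ ω, (if |Z 1 ω| ≤ t then |Z 1 ω| else 0) ∂(ℙ : Measure Ω))
        ≤ 4 * x0 + C * (t * T t) := by
    intro t ht
    have ht0 : 0 < t := lt_of_lt_of_le (by linarith) ht
    have h2x0 : (0:ℝ) < 2 * x0 := by linarith
    obtain ⟨K, hK1, hK2⟩ := exists_pow_two_between (t / (2 * x0))
      ((one_le_div h2x0).2 ht)
    have hK2' : (2:ℝ) ^ K ≤ t / x0 := by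
      have e : 2 * (t / (2 * x0)) = t / x0 := by
        field_simp
      rw [e] at hK2
      exact hK2
    set s : ℕ → Set Ω := fun j => {ω | t / 2 ^ (j+1) < |Z 1 ω|} with hsdef
    have hsm : ∀ j, MeasurableSet (s j) := fun j =>
      measurableSet_lt measurable_const (hZm 1).abs
    have hpt : ∀ ω, (if |Z 1 ω| ≤ t then |Z 1 ω| else 0) ≤
        4 * x0 + ∑ j ∈ Finset.range K,
          (t / 2 ^ j) * Set.indicator (s j) (fun _ => (1:ℝ)) ω := by
      intro ω
      have hterm_nn : ∀ j ∈ Finset.range K,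
          0 ≤ (t / 2 ^ j) * Set.indicator (s j) (fun _ => (1:ℝ)) ω := by
        intro j _
        apply mul_nonneg (by positivity)
        exact Set.indicator_nonneg (fun _ _ => zero_le_one) ω
      have hsum_nn : 0 ≤ ∑ j ∈ Finset.range K,
          (t / 2 ^ j) * Set.indicator (s j) (fun _ => (1:ℝ)) ω :=
        Finset.sum_nonneg hterm_nn
      by_cases hle : |Z 1 ω| ≤ t
      · rw [if_pos hle]
        by_cases hsmall : |Z 1 ω| ≤ 4 * x0
        · linarith
        · push_neg at hsmall
          have hZpos : 0 < |Z 1 ω| := by linarith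
          have hex : ∃ j : ℕ, t / 2 ^ (j+1) < |Z 1 ω| := by
            obtain ⟨m, hm⟩ := pow_unbounded_of_one_lt (t / |Z 1 ω|)
              (by norm_num : (1:ℝ) < 2)
            refine ⟨m, ?_⟩
            rw [div_lt_iff₀ hZpos] at hm
            rw [div_lt_iff₀ (by positivity)]
            calc t < 2 ^ m * |Z 1 ω| := hm
              _ ≤ |Z 1 ω| * 2 ^ (m+1) := by
                  rw [pow_succ]; nlinarith [pow_pos (by norm_num : (0:ℝ) < 2) m]
          classical
          set j := Nat.find hex with hjdef
          have hj : t / 2 ^ (j+1) < |Z 1 ω| := Nat.find_spec hex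
          have hup : |Z 1 ω| ≤ t / 2 ^ j := by
            rcases Nat.eq_zero_or_pos j with h0 | hpos
            · rw [h0]; simpa using hle
            · have := Nat.find_min hex (Nat.sub_lt hpos one_pos)
              push_neg at this
              have hj1 : j - 1 + 1 = j := by omega
              rwa [hj1] at this
          have hjK : j < K := by
            have h4 : 4 * x0 < t / 2 ^ j := lt_of_lt_of_le hsmall hup
            rw [lt_div_iff₀ (by positivity)] at h4
            have h5 : (2:ℝ) ^ j < t / (2 * x0) := by
              rw [lt_div_iff₀ h2x0]; nlinarith
            have h6 : (2:ℝ) ^ j < 2 ^ K := lt_of_lt_of_le h5 hK1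
            exact_mod_cast (pow_lt_pow_iff_right₀ one_lt_two).1 h6
          have hmem : ω ∈ s j := hj
          have hone : (t / 2 ^ j) * Set.indicator (s j) (fun _ => (1:ℝ)) ω
              = t / 2 ^ j := by
            rw [Set.indicator_of_mem hmem]; ring
          have hsingle : (t / 2 ^ j) ≤ ∑ i ∈ Finset.range K,
              (t / 2 ^ i) * Set.indicator (s i) (fun _ => (1:ℝ)) ω := by
            rw [← hone]
            exact Finset.single_le_sum hterm_nn (Finset.mem_range.2 hjK)
          linarith
      · rw [if_neg hle]
        linarith
    have hint_g : Integrable (fun ω => if |Z 1 ω| ≤ t then |Z 1 ω| else 0)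
        (ℙ : Measure Ω) := by
      apply (integrable_const t).mono'
      · exact (Measurable.ite (measurableSet_le (hZm 1).abs measurable_const)
          (hZm 1).abs measurable_const).aestronglyMeasurable
      · apply ae_of_all
        intro ω
        rw [Real.norm_eq_abs]
        split_ifs with h
        · rw [abs_abs]; exact h
        · simpa using ht0.le
    have hint_j : ∀ j : ℕ, Integrable (fun ω =>
        (t / 2 ^ j) * Set.indicator (s j) (fun _ => (1:ℝ)) ω) (ℙ : Measure Ω) := by
      intro j
      exact (((integrable_const (1:ℝ)).indicator (hsm j)).const_mul _)
    have hint_h : Integrable (fun ω => 4 * x0 + ∑ j ∈ Finset.range K,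
        (t / 2 ^ j) * Set.indicator (s j) (fun _ => (1:ℝ)) ω) (ℙ : Measure Ω) :=
      (integrable_const _).add (integrable_finset_sum _ (fun j _ => hint_j j))
    have hinth : (∫ ω, (4 * x0 + ∑ j ∈ Finset.range K,
        (t / 2 ^ j) * Set.indicator (s j) (fun _ => (1:ℝ)) ω) ∂(ℙ : Measure Ω))
        = 4 * x0 + ∑ j ∈ Finset.range K, (t / 2 ^ j) * T (t / 2 ^ (j+1)) := by
      rw [integral_add (integrable_const _) (integrable_finset_sum _ (fun j _ => hint_j j))]
      rw [integral_const]
      simp only [measure_univ, probReal_univ, ENNReal.toReal_one, smul_eq_mul, one_mul]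
      congr 1
      rw [integral_finset_sum _ (fun j _ => hint_j j)]
      apply Finset.sum_congr rfl
      intro j _
      rw [integral_const_mul, integral_indicator_const _ (hsm j)]
      simp only [hTdef, hsdef, Measure.real, smul_eq_mul, mul_one]
    have hterm : ∀ j ∈ Finset.range K,
        (t / 2 ^ j) * T (t / 2 ^ (j+1)) ≤ 4 * (t * T t) * q ^ j := by
      intro j hj
      have hjK : j < K := Finset.mem_range.1 hj
      have hpj : (0:ℝ) < 2 ^ (j+1) := by positivity
      have hy : x0 ≤ t / 2 ^ (j+1) := by
        rw [le_div_iff₀ hpj]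
        have h1 : (2:ℝ) ^ (j+1) ≤ 2 ^ K := pow_le_pow_right₀ one_le_two hjK
        have h2 : (2:ℝ) ^ (j+1) ≤ t / x0 := le_trans h1 hK2'
        rw [le_div_iff₀ hx0pos] at h2
        linarith
      have hyx : t / 2 ^ (j+1) ≤ t :=
        div_le_self ht0.le (one_le_pow₀ (one_le_two : (1:ℝ) ≤ 2))
      have hp := hPot (t / 2 ^ (j+1)) t hy hyx
      have harg : t / (t / 2 ^ (j+1)) = 2 ^ (j+1) := by
        field_simp
      rw [harg] at hp
      have hpow : ((2:ℝ) ^ (j+1)) ^ α' = 2 ^ (j+1) * q ^ (j+1) := by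
        have e1 : ((2:ℝ) ^ (j+1)) ^ α' = ((2:ℝ) ^ α') ^ (j+1) := by
          rw [← Real.rpow_natCast ((2:ℝ) ^ α') (j+1), ← Real.rpow_mul two_pos.le,
            ← Real.rpow_natCast (2:ℝ) (j+1), ← Real.rpow_mul two_pos.le, mul_comm]
        rw [e1, ← h2q, mul_pow]
      rw [hpow] at hp
      have hq2j : (0:ℝ) < 2 ^ j := by positivity
      calc (t / 2 ^ j) * T (t / 2 ^ (j+1))
          ≤ (t / 2 ^ j) * (2 * (2 ^ (j+1) * q ^ (j+1)) * T t) :=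
            mul_le_mul_of_nonneg_left hp (by positivity)
        _ = 4 * (t * T t) * q ^ j * q := by
            rw [pow_succ (2:ℝ) j, pow_succ q j]
            field_simp
            ring
        _ ≤ 4 * (t * T t) * q ^ j := by
            nlinarith [pow_nonneg hq0.le j, hTnn t, mul_nonneg (mul_nonneg ht0.le (hTnn t)) (pow_nonneg hq0.le j)]
    calc (∫ ω, (if |Z 1 ω| ≤ t then |Z 1 ω| else 0) ∂(ℙ : Measure Ω))
        ≤ ∫ ω, (4 * x0 + ∑ j ∈ Finset.range K,
            (t / 2 ^ j) * Set.indicator (s j) (fun _ => (1:ℝ)) ω) ∂(ℙ : Measure Ω) :=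
          integral_mono hint_g hint_h hpt
      _ = 4 * x0 + ∑ j ∈ Finset.range K, (t / 2 ^ j) * T (t / 2 ^ (j+1)) := hinth
      _ ≤ 4 * x0 + ∑ j ∈ Finset.range K, 4 * (t * T t) * q ^ j := by
          apply add_le_add_right
          exact Finset.sum_le_sum hterm
      _ = 4 * x0 + 4 * (t * T t) * ∑ j ∈ Finset.range K, q ^ j := by
          rw [Finset.mul_sum]
      _ ≤ 4 * x0 + 4 * (t * T t) * (1 / (1 - q)) := by
          apply add_le_add_right
          apply mul_le_mul_of_nonneg_left (geom_bound q hq0.le hq1 K)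
          have := hTnn t
          positivity
      _ = 4 * x0 + C * (t * T t) := by
          rw [hCdef]; ring
  -- identical distribution of coordinates
  have hid : ∀ m : ℤ, IdentDistrib (Z m) (Z 1) (ℙ : Measure Ω) (ℙ : Measure Ω) := by
    intro m
    have h := (hstat (m - 1)).comp (measurable_pi_apply (1:ℤ))
    simpa [Function.comp_def, show (1:ℤ) + (m - 1) = m by ring] using h
  have hid_int : ∀ (m : ℤ) (φ : ℝ → ℝ), Measurable φ →
      (∫ ω, φ (Z m ω) ∂(ℙ : Measure Ω)) = ∫ ω, φ (Z 1 ω) ∂(ℙ : Measure Ω) :=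
    fun m φ hφ => ((hid m).comp hφ).integral_eq
  -- key limsup bound
  have key : ∀ u : ℝ, 0 < u →
      Filter.limsup (fun n : ℕ =>
          ((ℙ : Measure Ω) {ω | ∃ k ∈ Finset.Icc 1 n, ε <
              |∑ i ∈ Finset.Icc 1 k,
                ((if |Z (i : ℤ) ω| ≤ u * a n then Z (i : ℤ) ω / a n else 0)
                  - ∫ x : Ω, (if |Z 1 x| ≤ u * a n then Z 1 x / a n else 0)
                      ∂(ℙ : Measure Ω))|}).toReal) atTop
        ≤ 2 / ε * (C * u ^ (1 - α)) := by
    intro u hu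
    have hDlim : Tendsto (fun n : ℕ => 2 / ε * (4 * x0 * ((n:ℝ) / a n)
        + C * u * ((n:ℝ) * T (u * a n)))) atTop
        (nhds (2 / ε * (C * u ^ (1 - α)))) := by
      have h := (tendsto_const_nhds (x := (2/ε : ℝ))).mul
        (((tendsto_const_nhds (x := (4*x0 : ℝ))).mul hna0).add
          ((tendsto_const_nhds (x := (C*u : ℝ))).mul (hratio u hu)))
      convert h using 2
      rw [mul_zero, zero_add]
      have hru : u ^ (1 - α) = u * u ^ (-α) := by
        rw [show (1:ℝ) - α = 1 + -α by ring, Real.rpow_add hu, Real.rpow_one]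
      rw [hru]; ring
    have hev : ∀ᶠ n : ℕ in atTop,
        ((ℙ : Measure Ω) {ω | ∃ k ∈ Finset.Icc 1 n, ε <
            |∑ i ∈ Finset.Icc 1 k,
              ((if |Z (i : ℤ) ω| ≤ u * a n then Z (i : ℤ) ω / a n else 0)
                - ∫ x : Ω, (if |Z 1 x| ≤ u * a n then Z 1 x / a n else 0)
                    ∂(ℙ : Measure Ω))|}).toReal
          ≤ 2 / ε * (4 * x0 * ((n:ℝ) / a n) + C * u * ((n:ℝ) * T (u * a n))) := by
      filter_upwards [haT.eventually_ge_atTop (2 * x0 / u)] with n hn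
      have han : 0 < a n := ha n
      have ht0 : 0 < u * a n := mul_pos hu han
      have ht : 2 * x0 ≤ u * a n := by
        rw [div_le_iff₀ hu] at hn
        nlinarith
      set c := ∫ x : Ω, (if |Z 1 x| ≤ u * a n then Z 1 x / a n else 0)
        ∂(ℙ : Measure Ω) with hcdef
      have hφm : Measurable (fun z : ℝ => |(if |z| ≤ u * a n then z / a n else 0) - c|) :=
        ((Measurable.ite (measurableSet_le measurable_abs measurable_const)
          (measurable_id.div_const _) measurable_const).sub measurable_const).abs
      have hφm0 : Measurable (fun z : ℝ => |if |z| ≤ u * a n then z / a n else 0|) :=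
        (Measurable.ite (measurableSet_le measurable_abs measurable_const)
          (measurable_id.div_const _) measurable_const).abs
      have habs0 : ∀ z : ℝ, |if |z| ≤ u * a n then z / a n else 0| ≤ u * a n / a n := by
        intro z
        split_ifs with h
        · rw [abs_div, abs_of_pos han]
          exact (div_le_div_iff_of_pos_right han).2 h
        · simpa using (div_pos ht0 han).le
      have hint : ∀ m : ℤ, Integrable (fun ω =>
          |(if |Z m ω| ≤ u * a n then Z m ω / a n else 0) - c|) (ℙ : Measure Ω) := by
        intro m
        apply (integrable_const (u * a n / a n + |c|)).mono'
        · exact (hφm.comp (hZm m)).aestronglyMeasurable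
        · apply ae_of_all
          intro ω
          rw [Real.norm_eq_abs, abs_abs]
          exact le_trans (abs_sub _ _) (add_le_add_left (habs0 _) _)
      have hint0 : Integrable (fun ω =>
          |if |Z 1 ω| ≤ u * a n then Z 1 ω / a n else 0|) (ℙ : Measure Ω) := by
        apply (integrable_const (u * a n / a n)).mono'
        · exact (hφm0.comp (hZm 1)).aestronglyMeasurable
        · exact ae_of_all _ fun ω => by rw [Real.norm_eq_abs, abs_abs]; exact habs0 _
      have hWint : Integrable (fun ω => ∑ i ∈ Finset.Icc 1 n,
          |(if |Z (i:ℤ) ω| ≤ u * a n then Z (i:ℤ) ω / a n else 0) - c|)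
          (ℙ : Measure Ω) := integrable_finset_sum _ (fun i _ => hint (i:ℤ))
      have hincl : {ω | ∃ k ∈ Finset.Icc 1 n, ε <
            |∑ i ∈ Finset.Icc 1 k,
              ((if |Z (i : ℤ) ω| ≤ u * a n then Z (i : ℤ) ω / a n else 0) - c)|}
          ⊆ {ω | ε ≤ ∑ i ∈ Finset.Icc 1 n,
              |(if |Z (i:ℤ) ω| ≤ u * a n then Z (i:ℤ) ω / a n else 0) - c|} := by
        rintro ω ⟨k, hk, hεk⟩
        have hk2 := (Finset.mem_Icc.1 hk).2
        refine le_trans (le_of_lt hεk) ?_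
        refine le_trans (Finset.abs_sum_le_sum_abs _ _) ?_
        exact Finset.sum_le_sum_of_subset_of_nonneg
          (Finset.Icc_subset_Icc_right hk2) (fun i _ _ => abs_nonneg _)
      have hmarkov := mul_meas_ge_le_integral_of_nonneg
        (ae_of_all _ (fun ω => Finset.sum_nonneg fun i _ => abs_nonneg _)) hWint ε
      have hmono := ENNReal.toReal_mono (measure_ne_top (ℙ : Measure Ω) _)
        (measure_mono hincl)
      have hWeq : (∫ ω, ∑ i ∈ Finset.Icc 1 n,
          |(if |Z (i:ℤ) ω| ≤ u * a n then Z (i:ℤ) ω / a n else 0) - c|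
          ∂(ℙ : Measure Ω))
          = (n:ℝ) * ∫ ω, |(if |Z 1 ω| ≤ u * a n then Z 1 ω / a n else 0) - c|
              ∂(ℙ : Measure Ω) := by
        rw [integral_finset_sum _ (fun (i : ℕ) _ => hint (i:ℤ))]
        have e2 : ∑ i ∈ Finset.Icc 1 n, (∫ ω, |(if |Z (i:ℤ) ω| ≤ u * a n
              then Z (i:ℤ) ω / a n else 0) - c| ∂(ℙ : Measure Ω))
            = ∑ _i ∈ Finset.Icc 1 n, (∫ ω, |(if |Z 1 ω| ≤ u * a n
              then Z 1 ω / a n else 0) - c| ∂(ℙ : Measure Ω)) :=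
          Finset.sum_congr rfl (fun i _ => hid_int (i:ℤ)
            (fun z => |(if |z| ≤ u * a n then z / a n else 0) - c|) hφm)
        rw [e2, Finset.sum_const, Nat.card_Icc]
        simp
      have habs : ∀ ω : Ω, |if |Z 1 ω| ≤ u * a n then Z 1 ω / a n else 0|
          = (if |Z 1 ω| ≤ u * a n then |Z 1 ω| else 0) * (a n)⁻¹ := by
        intro ω
        split_ifs with h
        · rw [abs_div, abs_of_pos han, div_eq_mul_inv]
        · simp
      have hBeq : (∫ ω, |if |Z 1 ω| ≤ u * a n then Z 1 ω / a n else 0|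
          ∂(ℙ : Measure Ω))
          = (∫ ω, (if |Z 1 ω| ≤ u * a n then |Z 1 ω| else 0) ∂(ℙ : Measure Ω))
            * (a n)⁻¹ := by
        rw [← integral_mul_const]
        exact integral_congr_ae (ae_of_all _ habs)
      have hc_abs : |c| ≤ ∫ ω, |if |Z 1 ω| ≤ u * a n then Z 1 ω / a n else 0|
          ∂(ℙ : Measure Ω) := by
        rw [hcdef]
        simpa [Real.norm_eq_abs] using
          norm_integral_le_integral_norm (μ := (ℙ : Measure Ω))
            (fun x : Ω => if |Z 1 x| ≤ u * a n then Z 1 x / a n else 0)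
      have hA2 : (∫ ω, |(if |Z 1 ω| ≤ u * a n then Z 1 ω / a n else 0) - c|
          ∂(ℙ : Measure Ω))
          ≤ 2 * ((∫ ω, (if |Z 1 ω| ≤ u * a n then |Z 1 ω| else 0)
              ∂(ℙ : Measure Ω)) * (a n)⁻¹) := by
        have h1 : (∫ ω, |(if |Z 1 ω| ≤ u * a n then Z 1 ω / a n else 0) - c|
            ∂(ℙ : Measure Ω))
            ≤ ∫ ω, (|if |Z 1 ω| ≤ u * a n then Z 1 ω / a n else 0| + |c|)
              ∂(ℙ : Measure Ω) := by
          apply integral_mono (hint 1) (hint0.add (integrable_const _))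
          intro ω
          exact abs_sub _ _
        rw [integral_add hint0 (integrable_const _), integral_const] at h1
        simp only [measure_univ, probReal_univ, ENNReal.toReal_one, smul_eq_mul, one_mul] at h1
        have h2 := hc_abs
        rw [hBeq] at h1 h2
        linarith
      have hM := hmom (u * a n) ht
      -- final chain
      have hstep1 : ((ℙ : Measure Ω) {ω | ∃ k ∈ Finset.Icc 1 n, ε <
            |∑ i ∈ Finset.Icc 1 k,
              ((if |Z (i : ℤ) ω| ≤ u * a n then Z (i : ℤ) ω / a n else 0) - c)|}).toReal
          ≤ ε⁻¹ * ((n:ℝ) * ∫ ω, |(if |Z 1 ω| ≤ u * a n then Z 1 ω / a n else 0) - c|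
              ∂(ℙ : Measure Ω)) := by
        rw [← hWeq]
        calc ((ℙ : Measure Ω) _).toReal
            ≤ ((ℙ : Measure Ω) {ω | ε ≤ ∑ i ∈ Finset.Icc 1 n,
                |(if |Z (i:ℤ) ω| ≤ u * a n then Z (i:ℤ) ω / a n else 0) - c|}).toReal :=
              hmono
          _ ≤ ε⁻¹ * ∫ ω, ∑ i ∈ Finset.Icc 1 n,
                |(if |Z (i:ℤ) ω| ≤ u * a n then Z (i:ℤ) ω / a n else 0) - c|
                ∂(ℙ : Measure Ω) := by
              rw [le_inv_mul_iff₀ hε]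
              exact hmarkov
      calc ((ℙ : Measure Ω) {ω | ∃ k ∈ Finset.Icc 1 n, ε <
            |∑ i ∈ Finset.Icc 1 k,
              ((if |Z (i : ℤ) ω| ≤ u * a n then Z (i : ℤ) ω / a n else 0) - c)|}).toReal
          ≤ ε⁻¹ * ((n:ℝ) * ∫ ω, |(if |Z 1 ω| ≤ u * a n then Z 1 ω / a n else 0) - c|
              ∂(ℙ : Measure Ω)) := hstep1
        _ ≤ ε⁻¹ * ((n:ℝ) * (2 * ((4 * x0 + C * ((u * a n) * T (u * a n))) * (a n)⁻¹))) := by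
            apply mul_le_mul_of_nonneg_left _ (inv_nonneg.2 hε.le)
            apply mul_le_mul_of_nonneg_left _ (Nat.cast_nonneg n)
            refine le_trans hA2 ?_
            apply mul_le_mul_of_nonneg_left _ (by norm_num : (0:ℝ) ≤ 2)
            exact mul_le_mul_of_nonneg_right hM (inv_nonneg.2 han.le)
        _ = 2 / ε * (4 * x0 * ((n:ℝ) / a n) + C * u * ((n:ℝ) * T (u * a n))) := by
            field_simp
    calc Filter.limsup (fun n : ℕ =>
          ((ℙ : Measure Ω) {ω | ∃ k ∈ Finset.Icc 1 n, ε <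
              |∑ i ∈ Finset.Icc 1 k,
                ((if |Z (i : ℤ) ω| ≤ u * a n then Z (i : ℤ) ω / a n else 0)
                  - ∫ x : Ω, (if |Z 1 x| ≤ u * a n then Z 1 x / a n else 0)
                      ∂(ℙ : Measure Ω))|}).toReal) atTop
        ≤ Filter.limsup (fun n : ℕ => 2 / ε * (4 * x0 * ((n:ℝ) / a n)
            + C * u * ((n:ℝ) * T (u * a n)))) atTop :=
          limsup_le_limsup hev
            (isCoboundedUnder_le_of_le _ (fun n => ENNReal.toReal_nonneg))
            hDlim.isBoundedUnder_le
      _ = 2 / ε * (C * u ^ (1 - α)) := hDlim.limsup_eq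
  -- lower bound and squeeze
  have hlow : ∀ u : ℝ, (0:ℝ) ≤
      Filter.limsup (fun n : ℕ =>
          ((ℙ : Measure Ω) {ω | ∃ k ∈ Finset.Icc 1 n, ε <
              |∑ i ∈ Finset.Icc 1 k,
                ((if |Z (i : ℤ) ω| ≤ u * a n then Z (i : ℤ) ω / a n else 0)
                  - ∫ x : Ω, (if |Z 1 x| ≤ u * a n then Z 1 x / a n else 0)
                      ∂(ℙ : Measure Ω))|}).toReal) atTop := by
    intro u
    exact le_limsup_of_frequently_le
      (Frequently.of_forall (fun n => ENNReal.toReal_nonneg))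
      (isBoundedUnder_of ⟨1, fun n => by
        simpa using ENNReal.toReal_mono ENNReal.one_ne_top prob_le_one⟩)
  have hhlim : Tendsto (fun u : ℝ => 2 / ε * (C * u ^ (1 - α)))
      (nhdsWithin 0 (Set.Ioi 0)) (nhds 0) := by
    have h0 : Tendsto (fun u : ℝ => u ^ (1 - α)) (nhds 0) (nhds 0) := by
      have hc := (Real.continuousAt_rpow_const 0 (1 - α)
        (Or.inr (by linarith))).tendsto
      rwa [Real.zero_rpow (by linarith : (1:ℝ) - α ≠ 0)] at hc
    have h1 := ((h0.const_mul C).const_mul (2/ε)).mono_left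
      (nhdsWithin_le_nhds : nhdsWithin (0:ℝ) (Set.Ioi 0) ≤ nhds 0)
    simpa using h1
  apply tendsto_of_tendsto_of_tendsto_of_le_of_le' tendsto_const_nhds hhlim
  · exact eventually_nhdsWithin_of_forall (fun u _ => hlow u)
  · exact eventually_nhdsWithin_of_forall (fun u hu => key u hu)
end
end

section
/- The map $h:D^2_{\uparrow}\to D^1_{\uparrow}$ defined by $h(x,y)(t)=x(t)\vee y(t)$ is continuous when $D^2_{\uparrow}$ carries the weak Skorokhod $M_1$ topology and $D^1_{\uparrow}$ the standard $M_1$ topology. -/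
open MeasureTheory Filter Set Topology

noncomputable section

/-- Left limit of `x` at `t`, with the convention `x(0-) = x(0)`. -/
def lft (x : ℝ → ℝ) (t : ℝ) : ℝ := if t = 0 then x 0 else Function.leftLim x t

/-- `x` is càdlàg on `[0,1]`: right-continuous on `[0,1)` and with left limits on `(0,1]`. -/
def Cadlag (x : ℝ → ℝ) : Prop :=
  (∀ t ∈ Set.Ico (0:ℝ) 1, ContinuousWithinAt x (Set.Ici t) t) ∧
  (∀ t ∈ Set.Ioc (0:ℝ) 1, Tendsto x (nhdsWithin t (Set.Iio t)) (nhds (Function.leftLim x t)))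

/-- The completed (thin) graph of `x`. -/
def thinGraph (x : ℝ → ℝ) : Set (ℝ × ℝ) :=
  {q | q.1 ∈ Set.Icc (0:ℝ) 1 ∧
    ∃ l ∈ Set.Icc (0:ℝ) 1, q.2 = l * lft x q.1 + (1 - l) * x q.1}

/-- The order on the completed graph of `x`. -/
def GraphLe (x : ℝ → ℝ) (a b : ℝ × ℝ) : Prop :=
  a.1 < b.1 ∨ (a.1 = b.1 ∧ |lft x a.1 - a.2| ≤ |lft x b.1 - b.2|)

/-- An `M₁` parametric representation of (the completed graph of) `x`: a continuous map of
`[0,1]` onto the graph which is nondecreasing for the graph order. -/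
def IsM1Rep (x : ℝ → ℝ) (rr uu : ℝ → ℝ) : Prop :=
  ContinuousOn rr (Set.Icc 0 1) ∧ ContinuousOn uu (Set.Icc 0 1) ∧
  (fun s => (rr s, uu s)) '' Set.Icc 0 1 = thinGraph x ∧
  ∀ s₁ ∈ Set.Icc (0:ℝ) 1, ∀ s₂ ∈ Set.Icc (0:ℝ) 1, s₁ ≤ s₂ →
    GraphLe x (rr s₁, uu s₁) (rr s₂, uu s₂)

/-- The Skorokhod `M₁` metric on `D([0,1],ℝ)`. -/
def dM1 (x y : ℝ → ℝ) : ℝ :=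
  sInf {c | ∃ r₁ u₁ r₂ u₂ : ℝ → ℝ, IsM1Rep x r₁ u₁ ∧ IsM1Rep y r₂ u₂ ∧
    c = (⨆ s : Set.Icc (0:ℝ) 1, |r₁ (s : ℝ) - r₂ (s : ℝ)|)
      ⊔ (⨆ s : Set.Icc (0:ℝ) 1, |u₁ (s : ℝ) - u₂ (s : ℝ)|)}

section Aux

open Function

variable {f g : ℝ → ℝ}

lemma lft_zero (f : ℝ → ℝ) : lft f 0 = f 0 := if_pos rfl

lemma lft_eq_leftLim {t : ℝ} (ht : t ≠ 0) : lft f t = Function.leftLim f t := if_neg ht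

lemma le_lft (hc : Cadlag f) (hm : MonotoneOn f (Set.Icc 0 1))
    {t u : ℝ} (ht : t ∈ Set.Icc (0:ℝ) 1) (hu : u ∈ Set.Icc (0:ℝ) 1) (hut : u < t) :
    f u ≤ lft f t := by
  have ht0 : 0 < t := lt_of_le_of_lt hu.1 hut
  rw [lft_eq_leftLim (ne_of_gt ht0)]
  apply ge_of_tendsto (hc.2 t ⟨ht0, ht.2⟩)
  filter_upwards [Ioo_mem_nhdsLT hut] with v hv
  exact hm hu ⟨le_trans hu.1 hv.1.le, hv.2.le.trans ht.2⟩ hv.1.le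

lemma lft_le_self (hc : Cadlag f) (hm : MonotoneOn f (Set.Icc 0 1))
    {t : ℝ} (ht : t ∈ Set.Icc (0:ℝ) 1) : lft f t ≤ f t := by
  rcases eq_or_lt_of_le ht.1 with h0 | h0
  · rw [← h0, lft_zero]
  · rw [lft_eq_leftLim (ne_of_gt h0)]
    apply le_of_tendsto (hc.2 t ⟨h0, ht.2⟩)
    filter_upwards [Ioo_mem_nhdsLT h0] with v hv
    exact hm ⟨hv.1.le, hv.2.le.trans ht.2⟩ ht hv.2.le

lemma lft_mono (hc : Cadlag f) (hm : MonotoneOn f (Set.Icc 0 1))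
    {u t : ℝ} (hu : u ∈ Set.Icc (0:ℝ) 1) (ht : t ∈ Set.Icc (0:ℝ) 1) (hut : u ≤ t) :
    lft f u ≤ lft f t := by
  rcases eq_or_lt_of_le hut with h | h
  · rw [h]
  · exact (lft_le_self hc hm hu).trans (le_lft hc hm ht hu h)

lemma f0_le_lft (hc : Cadlag f) (hm : MonotoneOn f (Set.Icc 0 1))
    {t : ℝ} (ht : t ∈ Set.Icc (0:ℝ) 1) : f 0 ≤ lft f t := by
  rcases eq_or_lt_of_le ht.1 with h0 | h0
  · rw [← h0, lft_zero]
  · exact le_lft hc hm ht ⟨le_rfl, zero_le_one⟩ h0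

lemma strict_sep (hc : Cadlag f) (hm : MonotoneOn f (Set.Icc 0 1))
    {u t : ℝ} (hu : u ∈ Set.Icc (0:ℝ) 1) (ht : t ∈ Set.Icc (0:ℝ) 1) (hut : u < t) :
    u + f u < t + lft f t :=
  add_lt_add_of_lt_of_le hut (le_lft hc hm ht hu hut)

lemma add_lft_le (hc : Cadlag f) (hm : MonotoneOn f (Set.Icc 0 1))
    {t s : ℝ} (ht : t ∈ Set.Ioc (0:ℝ) 1)
    (h : ∀ u, 0 ≤ u → u < t → u + f u < s) : t + lft f t ≤ s := by
  have key : ∀ u, 0 ≤ u → u < t → f u ≤ s - t := by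
    intro u hu0 hut
    by_contra hcon
    push_neg at hcon
    obtain ⟨u', hu'1, hu'2⟩ := exists_between (max_lt hut (by linarith : s - f u < t))
    have huu' : u ≤ u' := le_of_lt (lt_of_le_of_lt (le_max_left _ _) hu'1)
    have hu'0 : 0 ≤ u' := le_trans hu0 huu'
    have h1 : f u ≤ f u' :=
      hm ⟨hu0, le_trans hut.le ht.2⟩ ⟨hu'0, hu'2.le.trans ht.2⟩ huu'
    have h2 := h u' hu'0 hu'2
    have h3 : s - f u < u' := lt_of_le_of_lt (le_max_right _ _) hu'1
    linarith
  rw [lft_eq_leftLim (ne_of_gt ht.1)]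
  have hlim : Function.leftLim f t ≤ s - t := by
    apply le_of_tendsto (hc.2 t ht)
    filter_upwards [Ioo_mem_nhdsLT ht.1] with v hv
    exact key v hv.1.le hv.2
  linarith

lemma exists_right_small (hc : Cadlag f) (hm : MonotoneOn f (Set.Icc 0 1))
    {t s : ℝ} (ht : t ∈ Set.Ico (0:ℝ) 1) (h : t + f t < s) :
    ∃ t', t' ∈ Set.Icc (0:ℝ) 1 ∧ t < t' ∧ t' + lft f t' < s := by
  have hT : Tendsto f (nhdsWithin t (Set.Ioi t)) (nhds (f t)) :=
    ((hc.1 t ht).tendsto).mono_left (nhdsWithin_mono _ Set.Ioi_subset_Ici_self)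
  have hT2 : Tendsto (fun u => u + f u) (nhdsWithin t (Set.Ioi t)) (nhds (t + f t)) :=
    (tendsto_id.mono_left nhdsWithin_le_nhds).add hT
  have hev : ∀ᶠ u in nhdsWithin t (Set.Ioi t), u + f u < s := hT2.eventually_lt_const h
  have hmem : Set.Ioo t 1 ∈ nhdsWithin t (Set.Ioi t) :=
    Ioo_mem_nhdsGT_of_mem ⟨le_rfl, ht.2⟩
  obtain ⟨u, hu1, hu2⟩ := (hev.and (eventually_of_mem hmem (fun u hu => hu))).exists
  have huI : u ∈ Set.Icc (0:ℝ) 1 := ⟨le_trans ht.1 hu2.1.le, hu2.2.le⟩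
  exact ⟨u, huI, hu2.1, lt_of_le_of_lt
    (by linarith [lft_le_self hc hm huI]) hu1⟩

/-! ### The canonical parametrization -/

def TfSet (f : ℝ → ℝ) (s : ℝ) : Set ℝ :=
  insert 0 {t | t ∈ Set.Icc (0:ℝ) 1 ∧ t + lft f t < s}

def Tf (f : ℝ → ℝ) (s : ℝ) : ℝ := sSup (TfSet f s)

lemma TfSet_nonempty (f : ℝ → ℝ) (s : ℝ) : (TfSet f s).Nonempty := ⟨0, Set.mem_insert _ _⟩

lemma TfSet_bdd (f : ℝ → ℝ) (s : ℝ) : BddAbove (TfSet f s) := by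
  refine ⟨1, fun t htm => ?_⟩
  rcases Set.mem_insert_iff.1 htm with h | h
  · rw [h]; exact zero_le_one
  · exact h.1.2

lemma Tf_nonneg (f : ℝ → ℝ) (s : ℝ) : 0 ≤ Tf f s :=
  le_csSup (TfSet_bdd f s) (Set.mem_insert _ _)

lemma Tf_le_one (f : ℝ → ℝ) (s : ℝ) : Tf f s ≤ 1 := by
  apply csSup_le (TfSet_nonempty f s)
  intro t htm
  rcases Set.mem_insert_iff.1 htm with h | h
  · rw [h]; exact zero_le_one
  · exact h.1.2

lemma Tf_mono (f : ℝ → ℝ) {s₁ s₂ : ℝ} (h : s₁ ≤ s₂) : Tf f s₁ ≤ Tf f s₂ := by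
  apply csSup_le_csSup (TfSet_bdd f s₂) (TfSet_nonempty f s₁)
  intro t htm
  rcases Set.mem_insert_iff.1 htm with h' | h'
  · rw [h']; exact Set.mem_insert _ _
  · exact Set.mem_insert_iff.2 (Or.inr ⟨h'.1, lt_of_lt_of_le h'.2 (by linarith)⟩)

lemma TfSet_down (hc : Cadlag f) (hm : MonotoneOn f (Set.Icc 0 1))
    {s u v : ℝ} (hu : u ∈ TfSet f s) (hv0 : 0 ≤ v) (hvu : v ≤ u) : v ∈ TfSet f s := by
  rcases Set.mem_insert_iff.1 hu with h | h
  · exact Set.mem_insert_iff.2 (Or.inl (le_antisymm (h ▸ hvu) hv0))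
  · have hvI : v ∈ Set.Icc (0:ℝ) 1 := ⟨hv0, hvu.trans h.1.2⟩
    exact Set.mem_insert_iff.2 (Or.inr ⟨hvI,
      lt_of_le_of_lt (add_le_add hvu (lft_mono hc hm hvI h.1 hvu)) h.2⟩)

lemma Tf_lip_oneside (hc : Cadlag f) (hm : MonotoneOn f (Set.Icc 0 1))
    {s₁ s₂ : ℝ} (h : s₁ ≤ s₂) : Tf f s₂ ≤ Tf f s₁ + (s₂ - s₁) := by
  apply csSup_le (TfSet_nonempty f s₂)
  intro t htm
  rcases Set.mem_insert_iff.1 htm with h0 | hts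
  · have := Tf_nonneg f s₁; linarith
  · rcases lt_or_ge (t - (s₂ - s₁)) 0 with hneg | hneg
    · have := Tf_nonneg f s₁; linarith
    · have hle : t - (s₂ - s₁) ≤ t := by linarith
      have hmem : t - (s₂ - s₁) ∈ TfSet f s₁ := by
        refine Set.mem_insert_iff.2 (Or.inr ⟨⟨hneg, hle.trans hts.1.2⟩, ?_⟩)
        have hlft : lft f (t - (s₂ - s₁)) ≤ lft f t :=
          lft_mono hc hm ⟨hneg, hle.trans hts.1.2⟩ hts.1 hle
        linarith [hts.2]
      have h9 : t - (s₂ - s₁) ≤ Tf f s₁ := le_csSup (TfSet_bdd f s₁) hmem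
      linarith

lemma Tf_abs_lip (hc : Cadlag f) (hm : MonotoneOn f (Set.Icc 0 1))
    (s₁ s₂ : ℝ) : |Tf f s₁ - Tf f s₂| ≤ |s₁ - s₂| := by
  rcases le_total s₁ s₂ with h | h
  · have h1 := Tf_mono f h
    have h2 := Tf_lip_oneside hc hm h
    rw [abs_of_nonpos (by linarith), abs_of_nonpos (by linarith)]
    linarith
  · have h1 := Tf_mono f h
    have h2 := Tf_lip_oneside hc hm h
    rw [abs_of_nonneg (by linarith), abs_of_nonneg (by linarith)]
    linarith

lemma Tf_continuous (hc : Cadlag f) (hm : MonotoneOn f (Set.Icc 0 1)) :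
    Continuous (Tf f) := by
  have : LipschitzWith 1 (Tf f) := by
    apply LipschitzWith.of_dist_le_mul
    intro a b
    rw [Real.dist_eq, Real.dist_eq, NNReal.coe_one, one_mul]
    exact Tf_abs_lip hc hm a b
  exact this.continuous

lemma mem_thinGraph_iff (hc : Cadlag f) (hm : MonotoneOn f (Set.Icc 0 1)) {t z : ℝ} :
    (t, z) ∈ thinGraph f ↔ t ∈ Set.Icc (0:ℝ) 1 ∧ lft f t ≤ z ∧ z ≤ f t := by
  constructor
  · rintro ⟨ht, l, hl, hz⟩
    have hLV := lft_le_self hc hm ht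
    simp only at hz ht
    refine ⟨ht, ?_, ?_⟩ <;> nlinarith [hl.1, hl.2]
  · rintro ⟨ht, h1, h2⟩
    refine ⟨ht, ?_⟩
    by_cases hLV : f t - lft f t = 0
    · refine ⟨0, ⟨le_rfl, zero_le_one⟩, ?_⟩
      simp only
      have : z = f t := by linarith
      rw [this]; ring
    · have hlt : lft f t < f t :=
        lt_of_le_of_ne (lft_le_self hc hm ht) (fun h => hLV (by linarith))
      refine ⟨(f t - z) / (f t - lft f t),
        ⟨div_nonneg (by linarith) (by linarith),
         (div_le_one (by linarith)).2 (by linarith)⟩, ?_⟩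
      simp only
      field_simp
      ring

lemma Tf_graph_eq (hc : Cadlag f) (hm : MonotoneOn f (Set.Icc 0 1)) {t z : ℝ}
    (h : (t, z) ∈ thinGraph f) : Tf f (t + z) = t := by
  obtain ⟨ht, h1, h2⟩ := (mem_thinGraph_iff hc hm).1 h
  apply le_antisymm
  · apply csSup_le (TfSet_nonempty f _)
    intro u hu
    rcases Set.mem_insert_iff.1 hu with h0 | hus
    · rw [h0]; exact ht.1
    · by_contra hcon
      push_neg at hcon
      have := strict_sep hc hm ht hus.1 hcon
      linarith [hus.2]
  · apply le_of_forall_lt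
    intro c hct
    rcases lt_or_ge c 0 with hc0 | hc0
    · exact lt_of_lt_of_le hc0 (Tf_nonneg f _)
    · have hmid : (c + t) / 2 ∈ Set.Icc (0:ℝ) 1 :=
        ⟨by linarith, by linarith [ht.2]⟩
      have hu : (c + t) / 2 ∈ TfSet f (t + z) := by
        refine Set.mem_insert_iff.2 (Or.inr ⟨hmid, ?_⟩)
        have h3 := lft_le_self hc hm hmid
        have h4 := strict_sep hc hm hmid ht (by linarith : (c + t) / 2 < t)
        linarith
      calc c < (c + t) / 2 := by linarith
        _ ≤ Tf f (t + z) := le_csSup (TfSet_bdd f _) hu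

lemma Tf_between (hc : Cadlag f) (hm : MonotoneOn f (Set.Icc 0 1)) {s : ℝ}
    (hs : s ∈ Set.Icc (f 0) (1 + f 1)) :
    lft f (Tf f s) ≤ s - Tf f s ∧ s - Tf f s ≤ f (Tf f s) := by
  have htI : Tf f s ∈ Set.Icc (0:ℝ) 1 := ⟨Tf_nonneg f s, Tf_le_one f s⟩
  constructor
  · rcases eq_or_lt_of_le htI.1 with h0 | h0
    · rw [← h0, lft_zero]
      linarith [hs.1]
    · have hkey : Tf f s + lft f (Tf f s) ≤ s := by
        apply add_lft_le hc hm ⟨h0, htI.2⟩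
        intro u hu0 hut
        obtain ⟨u', hu'1, hu'2⟩ := exists_between hut
        have humem : u' ∈ TfSet f s := by
          obtain ⟨w, hw, hww⟩ := exists_lt_of_lt_csSup (TfSet_nonempty f s) hu'2
          exact TfSet_down hc hm hw (by linarith) hww.le
        rcases Set.mem_insert_iff.1 humem with h | h
        · exfalso; rw [h] at hu'1; linarith
        · have hle := le_lft hc hm h.1 ⟨hu0, by linarith [htI.2, h.1.2]⟩ hu'1
          linarith [h.2]
      linarith
  · rcases eq_or_lt_of_le htI.2 with h1 | h1
    · rw [h1]; linarith [hs.2]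
    · by_contra hcon
      push_neg at hcon
      obtain ⟨t', ht'I, htt', hlt⟩ :=
        exists_right_small hc hm ⟨htI.1, h1⟩ (by linarith : Tf f s + f (Tf f s) < s)
      have hmem : t' ∈ TfSet f s := Set.mem_insert_iff.2 (Or.inr ⟨ht'I, hlt⟩)
      have h9 : t' ≤ Tf f s := le_csSup (TfSet_bdd f s) hmem
      linarith

lemma Tf_eq_zero (hc : Cadlag f) (hm : MonotoneOn f (Set.Icc 0 1))
    {s : ℝ} (hs : s ≤ f 0) : Tf f s = 0 := by
  apply le_antisymm _ (Tf_nonneg f s)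
  apply csSup_le (TfSet_nonempty f s)
  intro t ht
  rcases Set.mem_insert_iff.1 ht with h | h
  · exact le_of_eq h
  · exfalso
    have := f0_le_lft hc hm h.1
    linarith [h.2, h.1.1]

lemma csSup_inter_downclosed {A B : Set ℝ} (hA0 : (0:ℝ) ∈ A) (hB0 : (0:ℝ) ∈ B)
    (hAb : BddAbove A) (hBb : BddAbove B)
    (hAd : ∀ u ∈ A, ∀ v, 0 ≤ v → v ≤ u → v ∈ A)
    (hBd : ∀ u ∈ B, ∀ v, 0 ≤ v → v ≤ u → v ∈ B) :
    sSup (A ∩ B) = sSup A ⊓ sSup B := by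
  have hABb : BddAbove (A ∩ B) := hAb.mono Set.inter_subset_left
  apply le_antisymm
  · exact le_inf (csSup_le_csSup hAb ⟨0, hA0, hB0⟩ Set.inter_subset_left)
      (csSup_le_csSup hBb ⟨0, hA0, hB0⟩ Set.inter_subset_right)
  · apply le_of_forall_lt
    intro c hcs
    rcases lt_or_ge c 0 with hc0 | hc0
    · exact lt_of_lt_of_le hc0 (le_csSup hABb ⟨hA0, hB0⟩)
    · obtain ⟨u, huA, hcu⟩ := exists_lt_of_lt_csSup ⟨0, hA0⟩ (lt_of_lt_of_le hcs inf_le_left)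
      obtain ⟨v, hvB, hcv⟩ := exists_lt_of_lt_csSup ⟨0, hB0⟩ (lt_of_lt_of_le hcs inf_le_right)
      have hmin0 : 0 ≤ min u v := le_trans hc0 (le_of_lt (lt_min hcu hcv))
      have hw : min u v ∈ A ∩ B :=
        ⟨hAd u huA _ hmin0 (min_le_left _ _), hBd v hvB _ hmin0 (min_le_right _ _)⟩
      exact lt_of_lt_of_le (lt_min hcu hcv) (le_csSup hABb hw)

/-! ### Maxima -/

lemma cadlag_max {x y : ℝ → ℝ} (hx : Cadlag x) (hy : Cadlag y) :
    Cadlag (fun t => x t ⊔ y t) := by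
  constructor
  · intro t ht
    exact (hx.1 t ht).sup (hy.1 t ht)
  · intro t ht
    have hT : Tendsto (fun u => x u ⊔ y u) (nhdsWithin t (Set.Iio t))
        (nhds (Function.leftLim x t ⊔ Function.leftLim y t)) :=
      (hx.2 t ht).sup_nhds (hy.2 t ht)
    have hnb : (nhdsWithin t (Set.Iio t)).NeBot := inferInstance
    rwa [leftLim_eq_of_tendsto hT]

lemma lft_max {x y : ℝ → ℝ} (hx : Cadlag x) (hy : Cadlag y) {t : ℝ}
    (ht : t ∈ Set.Icc (0:ℝ) 1) :
    lft (fun u => x u ⊔ y u) t = lft x t ⊔ lft y t := by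
  rcases eq_or_lt_of_le ht.1 with h0 | h0
  · rw [← h0]; simp [lft]
  · have hne := ne_of_gt h0
    rw [lft_eq_leftLim hne, lft_eq_leftLim hne, lft_eq_leftLim hne]
    have hnb : (nhdsWithin t (Set.Iio t)).NeBot := inferInstance
    exact leftLim_eq_of_tendsto
      ((hx.2 t ⟨h0, ht.2⟩).sup_nhds (hy.2 t ⟨h0, ht.2⟩))

lemma TfSet_max {x y : ℝ → ℝ} (hx : Cadlag x) (hy : Cadlag y) (s : ℝ) :
    TfSet (fun t => x t ⊔ y t) s = TfSet x s ∩ TfSet y s := by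
  ext t
  simp only [TfSet, Set.mem_insert_iff, Set.mem_setOf_eq, Set.mem_inter_iff]
  constructor
  · rintro (h0 | ⟨htI, hlt⟩)
    · exact ⟨Or.inl h0, Or.inl h0⟩
    · rw [lft_max hx hy htI] at hlt
      exact ⟨Or.inr ⟨htI, by
          have := le_sup_left (a := lft x t) (b := lft y t); linarith⟩,
        Or.inr ⟨htI, by
          have := le_sup_right (a := lft x t) (b := lft y t); linarith⟩⟩
  · rintro ⟨ha, hb⟩
    rcases ha with h0 | ⟨htI, hx'⟩
    · exact Or.inl h0
    · rcases hb with h0 | ⟨_, hy'⟩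
      · exact Or.inl h0
      · refine Or.inr ⟨htI, ?_⟩
        rw [lft_max hx hy htI]
        rcases le_total (lft x t) (lft y t) with h | h
        · rw [sup_eq_right.2 h]; exact hy'
        · rw [sup_eq_left.2 h]; exact hx'

lemma Tf_max {x y : ℝ → ℝ} (hx : Cadlag x) (hy : Cadlag y)
    (hmx : MonotoneOn x (Set.Icc 0 1)) (hmy : MonotoneOn y (Set.Icc 0 1)) (s : ℝ) :
    Tf (fun t => x t ⊔ y t) s = Tf x s ⊓ Tf y s := by
  unfold Tf
  rw [TfSet_max hx hy]
  exact csSup_inter_downclosed (Set.mem_insert _ _) (Set.mem_insert _ _)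
    (TfSet_bdd x s) (TfSet_bdd y s)
    (fun u hu v hv0 hvu => TfSet_down hx hmx hu hv0 hvu)
    (fun u hu v hv0 hvu => TfSet_down hy hmy hu hv0 hvu)

/-! ### The canonical representation -/

def crr (f : ℝ → ℝ) (σ : ℝ) : ℝ := Tf f (f 0 + σ * (1 + f 1 - f 0))

def cuu (f : ℝ → ℝ) (σ : ℝ) : ℝ := f 0 + σ * (1 + f 1 - f 0) - crr f σ

lemma f0_le_f1 (hm : MonotoneOn f (Set.Icc 0 1)) : f 0 ≤ f 1 :=
  hm ⟨le_rfl, zero_le_one⟩ ⟨zero_le_one, le_rfl⟩ zero_le_one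

lemma phi_mem (hm : MonotoneOn f (Set.Icc 0 1)) {σ : ℝ} (hσ : σ ∈ Set.Icc (0:ℝ) 1) :
    f 0 + σ * (1 + f 1 - f 0) ∈ Set.Icc (f 0) (1 + f 1) := by
  have hD : (1:ℝ) ≤ 1 + f 1 - f 0 := by linarith [f0_le_f1 hm]
  constructor
  · nlinarith [hσ.1]
  · nlinarith [hσ.2, hσ.1]

lemma isM1Rep_canonical (hc : Cadlag f) (hm : MonotoneOn f (Set.Icc 0 1)) :
    IsM1Rep f (crr f) (cuu f) := by
  have hD : (1:ℝ) ≤ 1 + f 1 - f 0 := by linarith [f0_le_f1 hm]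
  have hφc : Continuous (fun σ : ℝ => f 0 + σ * (1 + f 1 - f 0)) := by
    continuity
  have hcrr : Continuous (crr f) := (Tf_continuous hc hm).comp hφc
  refine ⟨hcrr.continuousOn, (hφc.sub hcrr).continuousOn, ?_, ?_⟩
  · ext p
    constructor
    · rintro ⟨σ, hσ, rfl⟩
      have hsI := phi_mem hm hσ
      have hb := Tf_between hc hm hsI
      exact (mem_thinGraph_iff hc hm).2 ⟨⟨Tf_nonneg f _, Tf_le_one f _⟩, hb.1, hb.2⟩
    · intro hp
      obtain ⟨t, z⟩ := p
      obtain ⟨ht, h1, h2⟩ := (mem_thinGraph_iff hc hm).1 hp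
      have hsI : t + z ∈ Set.Icc (f 0) (1 + f 1) := by
        constructor
        · have := f0_le_lft hc hm ht; linarith [ht.1]
        · have : f t ≤ f 1 := hm ht ⟨zero_le_one, le_rfl⟩ ht.2
          linarith [ht.2]
      refine ⟨(t + z - f 0) / (1 + f 1 - f 0),
        ⟨div_nonneg (by linarith [hsI.1]) (by linarith),
         (div_le_one (by linarith)).2 (by linarith [hsI.2])⟩, ?_⟩
      have hφ : f 0 + (t + z - f 0) / (1 + f 1 - f 0) * (1 + f 1 - f 0) = t + z := by
        field_simp
        ring
      have hT : Tf f (t + z) = t := Tf_graph_eq hc hm hp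
      simp only [crr, cuu, hφ, hT]
      exact Prod.ext rfl (by ring)
  · intro σ₁ hσ₁ σ₂ hσ₂ hle
    have hs : f 0 + σ₁ * (1 + f 1 - f 0) ≤ f 0 + σ₂ * (1 + f 1 - f 0) := by nlinarith
    have hT := Tf_mono f hs
    rcases eq_or_lt_of_le hT with heq | hlt
    · have hb₁ := Tf_between hc hm (phi_mem hm hσ₁)
      have hb₂ := Tf_between hc hm (phi_mem hm hσ₂)
      rw [heq] at hb₁
      refine Or.inr ⟨heq, ?_⟩
      show |lft f (crr f σ₁) - cuu f σ₁| ≤ |lft f (crr f σ₂) - cuu f σ₂|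
      have hu₁ : cuu f σ₁ = f 0 + σ₁ * (1 + f 1 - f 0) - crr f σ₁ := rfl
      have hu₂ : cuu f σ₂ = f 0 + σ₂ * (1 + f 1 - f 0) - crr f σ₂ := rfl
      have hc₁ : crr f σ₁ = Tf f (f 0 + σ₂ * (1 + f 1 - f 0)) := heq
      have hc₂ : crr f σ₂ = Tf f (f 0 + σ₂ * (1 + f 1 - f 0)) := rfl
      rw [hu₁, hu₂, hc₁, hc₂]
      rw [abs_of_nonpos (by linarith [hb₁.1]), abs_of_nonpos (by linarith [hb₂.1])]
      linarith [hs]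
    · exact Or.inl hlt

/-! ### Endpoints of representations -/

lemma rep_endpoints (hc : Cadlag f) (hm : MonotoneOn f (Set.Icc 0 1))
    {r u : ℝ → ℝ} (h : IsM1Rep f r u) : u 0 = f 0 ∧ u 1 = f 1 := by
  obtain ⟨hrc, huc, himg, hmono⟩ := h
  have hI0 : (0:ℝ) ∈ Set.Icc (0:ℝ) 1 := ⟨le_rfl, zero_le_one⟩
  have hI1 : (1:ℝ) ∈ Set.Icc (0:ℝ) 1 := ⟨zero_le_one, le_rfl⟩
  have h0mem : ((0:ℝ), f 0) ∈ thinGraph f :=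
    (mem_thinGraph_iff hc hm).2 ⟨hI0, le_of_eq (lft_zero f), le_rfl⟩
  have h1mem : ((1:ℝ), f 1) ∈ thinGraph f :=
    (mem_thinGraph_iff hc hm).2 ⟨hI1, lft_le_self hc hm hI1, le_rfl⟩
  have hmem0 : (r 0, u 0) ∈ thinGraph f := by
    rw [← himg]; exact Set.mem_image_of_mem _ hI0
  have hmem1 : (r 1, u 1) ∈ thinGraph f := by
    rw [← himg]; exact Set.mem_image_of_mem _ hI1
  constructor
  · rw [← himg] at h0mem
    obtain ⟨s₀, hs₀I, hs₀⟩ := h0mem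
    have hr₀ : r s₀ = 0 := congrArg Prod.fst hs₀
    have hG : r 0 < r s₀ ∨ (r 0 = r s₀ ∧
        |lft f (r 0) - u 0| ≤ |lft f (r s₀) - u s₀|) := hmono 0 hI0 s₀ hs₀I hs₀I.1
    have hr0 : r 0 = 0 := by
      rcases hG with hlt | ⟨heq, _⟩
      · exfalso
        rw [hr₀] at hlt
        have hge : (0:ℝ) ≤ r 0 := hmem0.1.1
        linarith
      · rw [heq, hr₀]
    obtain ⟨_, l, hl, hz⟩ := hmem0
    simp only [hr0, lft_zero] at hz
    rw [hz]; ring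
  · rw [← himg] at h1mem
    obtain ⟨s₁, hs₁I, hs₁⟩ := h1mem
    have hr₁ : r s₁ = 1 := congrArg Prod.fst hs₁
    have hu₁ : u s₁ = f 1 := congrArg Prod.snd hs₁
    have hG : r s₁ < r 1 ∨ (r s₁ = r 1 ∧
        |lft f (r s₁) - u s₁| ≤ |lft f (r 1) - u 1|) := hmono s₁ hs₁I 1 hI1 hs₁I.2
    rw [hr₁, hu₁] at hG
    have hle1 : r 1 ≤ 1 := hmem1.1.2
    have hr1 : r 1 = 1 := by
      rcases hG with hlt | ⟨heq, _⟩
      · exfalso; linarith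
      · exact heq.symm
    rcases hG with hlt | ⟨_, habs⟩
    · exfalso; linarith
    · rw [hr1] at habs
      obtain ⟨_, l, hl, hz⟩ := hmem1
      simp only [hr1] at hz
      have hL : lft f 1 ≤ f 1 := lft_le_self hc hm hI1
      have h5 : |lft f 1 - u 1| = (1 - l) * (f 1 - lft f 1) := by
        rw [hz, abs_of_nonpos (by nlinarith [hl.2])]
        ring
      have h6 : |lft f 1 - f 1| = f 1 - lft f 1 := by
        rw [abs_of_nonpos (by linarith)]; ring
      rw [h5, h6] at habs
      have h7 : l * (f 1 - lft f 1) = 0 :=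
        le_antisymm (by nlinarith) (mul_nonneg hl.1 (by linarith))
      rw [hz]
      linarith [h7]

/-! ### Closeness transfer -/

lemma Tf_le_of_close (hcf : Cadlag f) (hmf : MonotoneOn f (Set.Icc 0 1))
    (hcg : Cadlag g) (hmg : MonotoneOn g (Set.Icc 0 1))
    {r₁ u₁ r₂ u₂ : ℝ → ℝ} {δ : ℝ} (hδ : 0 ≤ δ)
    (h₁ : IsM1Rep f r₁ u₁) (h₂ : IsM1Rep g r₂ u₂)
    (hb : ∀ σ ∈ Set.Icc (0:ℝ) 1, |r₁ σ - r₂ σ| ≤ δ ∧ |u₁ σ - u₂ σ| ≤ δ)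
    (s : ℝ) : Tf f s ≤ Tf g s + 3 * δ := by
  have hI1 : (1:ℝ) ∈ Set.Icc (0:ℝ) 1 := ⟨zero_le_one, le_rfl⟩
  have e₁ := rep_endpoints hcf hmf h₁
  have e₂ := rep_endpoints hcg hmg h₂
  have hd1 : |f 1 - g 1| ≤ δ := by
    have := (hb 1 hI1).2
    rwa [e₁.2, e₂.2] at this
  rcases le_or_gt s (f 0) with hs0 | hs0
  · rw [Tf_eq_zero hcf hmf hs0]
    linarith [Tf_nonneg g s]
  rcases le_or_gt (1 + f 1) s with hs1 | hs1
  · have hgb : Tf g (1 + g 1) = 1 := by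
      have hmem : ((1:ℝ), g 1) ∈ thinGraph g :=
        (mem_thinGraph_iff hcg hmg).2 ⟨hI1, lft_le_self hcg hmg hI1, le_rfl⟩
      exact Tf_graph_eq hcg hmg hmem
    rcases le_or_gt (1 + g 1) s with h' | h'
    · have := Tf_mono g h'
      rw [hgb] at this
      linarith [Tf_le_one f s]
    · have hl := Tf_lip_oneside hcg hmg h'.le
      rw [hgb] at hl
      have hgd : 1 + g 1 - s ≤ δ := by
        have := abs_le.1 hd1
        linarith [this.1]
      linarith [Tf_le_one f s]
  · have hsI : s ∈ Set.Icc (f 0) (1 + f 1) := ⟨hs0.le, hs1.le⟩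
    have hbtw := Tf_between hcf hmf hsI
    have hpmem : (Tf f s, s - Tf f s) ∈ thinGraph f :=
      (mem_thinGraph_iff hcf hmf).2 ⟨⟨Tf_nonneg f s, Tf_le_one f s⟩, hbtw.1, hbtw.2⟩
    have himg₁ := h₁.2.2.1
    rw [← himg₁] at hpmem
    obtain ⟨σ, hσI, hσeq⟩ := hpmem
    have hr : r₁ σ = Tf f s := congrArg Prod.fst hσeq
    have hu : u₁ σ = s - Tf f s := congrArg Prod.snd hσeq
    have hq : (r₂ σ, u₂ σ) ∈ thinGraph g := by
      rw [← h₂.2.2.1]; exact Set.mem_image_of_mem _ hσI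
    have hTg : Tf g (r₂ σ + u₂ σ) = r₂ σ := Tf_graph_eq hcg hmg hq
    have hb' := hb σ hσI
    have hsum : r₁ σ + u₁ σ = s := by rw [hr, hu]; ring
    have hsdiff : |r₂ σ + u₂ σ - s| ≤ 2 * δ := by
      have h1 := abs_le.1 hb'.1
      have h2 := abs_le.1 hb'.2
      rw [abs_le]
      constructor <;> [skip; skip] <;> linarith [h1.1, h1.2, h2.1, h2.2]
    have hlip := Tf_abs_lip hcg hmg (r₂ σ + u₂ σ) s
    have hlip2 := abs_le.1 (hlip.trans hsdiff)
    have h1 := abs_le.1 hb'.1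
    rw [hTg] at hlip2
    linarith [h1.2]

lemma pointwise_le_iSup {r₁ r₂ : ℝ → ℝ} (h₁ : ContinuousOn r₁ (Set.Icc 0 1))
    (h₂ : ContinuousOn r₂ (Set.Icc 0 1)) {σ : ℝ} (hσ : σ ∈ Set.Icc (0:ℝ) 1) :
    |r₁ σ - r₂ σ| ≤ ⨆ s : Set.Icc (0:ℝ) 1, |r₁ (s : ℝ) - r₂ (s : ℝ)| := by
  have hcont : Continuous (fun s : Set.Icc (0:ℝ) 1 => |r₁ (s : ℝ) - r₂ (s : ℝ)|) :=
    (h₁.restrict.sub h₂.restrict).abs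
  have hbdd : BddAbove (Set.range fun s : Set.Icc (0:ℝ) 1 => |r₁ (s : ℝ) - r₂ (s : ℝ)|) :=
    (isCompact_range hcont).bddAbove
  exact le_ciSup hbdd (⟨σ, hσ⟩ : Set.Icc (0:ℝ) 1)

lemma dM1_set_nonneg {x y : ℝ → ℝ} :
    ∀ c ∈ {c | ∃ r₁ u₁ r₂ u₂ : ℝ → ℝ, IsM1Rep x r₁ u₁ ∧ IsM1Rep y r₂ u₂ ∧
      c = (⨆ s : Set.Icc (0:ℝ) 1, |r₁ (s : ℝ) - r₂ (s : ℝ)|)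
        ⊔ (⨆ s : Set.Icc (0:ℝ) 1, |u₁ (s : ℝ) - u₂ (s : ℝ)|)}, 0 ≤ c := by
  rintro c ⟨r₁, u₁, r₂, u₂, h₁, h₂, rfl⟩
  have : (0:ℝ) ≤ ⨆ s : Set.Icc (0:ℝ) 1, |r₁ (s : ℝ) - r₂ (s : ℝ)| :=
    Real.iSup_nonneg (fun s => abs_nonneg _)
  exact le_trans this le_sup_left

lemma dM1_lt_elim {x y : ℝ → ℝ} {δ : ℝ}
    (hx : Cadlag x) (hmx : MonotoneOn x (Set.Icc 0 1))
    (hy : Cadlag y) (hmy : MonotoneOn y (Set.Icc 0 1)) (h : dM1 x y < δ) :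
    ∃ r₁ u₁ r₂ u₂ : ℝ → ℝ, IsM1Rep x r₁ u₁ ∧ IsM1Rep y r₂ u₂ ∧
      (∀ σ ∈ Set.Icc (0:ℝ) 1, |r₁ σ - r₂ σ| ≤ δ ∧ |u₁ σ - u₂ σ| ≤ δ) := by
  have hne : {c | ∃ r₁ u₁ r₂ u₂ : ℝ → ℝ, IsM1Rep x r₁ u₁ ∧ IsM1Rep y r₂ u₂ ∧
      c = (⨆ s : Set.Icc (0:ℝ) 1, |r₁ (s : ℝ) - r₂ (s : ℝ)|)
        ⊔ (⨆ s : Set.Icc (0:ℝ) 1, |u₁ (s : ℝ) - u₂ (s : ℝ)|)}.Nonempty :=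
    ⟨_, crr x, cuu x, crr y, cuu y, isM1Rep_canonical hx hmx, isM1Rep_canonical hy hmy, rfl⟩
  obtain ⟨c, hcmem, hcδ⟩ := exists_lt_of_csInf_lt hne h
  obtain ⟨r₁, u₁, r₂, u₂, h₁, h₂, rfl⟩ := hcmem
  refine ⟨r₁, u₁, r₂, u₂, h₁, h₂, fun σ hσ => ⟨?_, ?_⟩⟩
  · exact le_of_lt (lt_of_le_of_lt
      (le_trans (pointwise_le_iSup h₁.1 h₂.1 hσ) le_sup_left) hcδ)
  · exact le_of_lt (lt_of_le_of_lt
      (le_trans (pointwise_le_iSup h₁.2.1 h₂.2.1 hσ) le_sup_right) hcδ)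

lemma dM1_nonneg {x y : ℝ → ℝ} (hx : Cadlag x) (hmx : MonotoneOn x (Set.Icc 0 1))
    (hy : Cadlag y) (hmy : MonotoneOn y (Set.Icc 0 1)) : 0 ≤ dM1 x y :=
  le_csInf ⟨_, crr x, cuu x, crr y, cuu y, isM1Rep_canonical hx hmx,
    isM1Rep_canonical hy hmy, rfl⟩ dM1_set_nonneg

lemma dM1_le_of_canonical {x y : ℝ → ℝ} (hx : Cadlag x) (hmx : MonotoneOn x (Set.Icc 0 1))
    (hy : Cadlag y) (hmy : MonotoneOn y (Set.Icc 0 1)) {b : ℝ} (hb0 : 0 ≤ b)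
    (h1 : ∀ σ ∈ Set.Icc (0:ℝ) 1, |crr x σ - crr y σ| ≤ b)
    (h2 : ∀ σ ∈ Set.Icc (0:ℝ) 1, |cuu x σ - cuu y σ| ≤ b) :
    dM1 x y ≤ b := by
  have hmem : ((⨆ s : Set.Icc (0:ℝ) 1, |crr x (s : ℝ) - crr y (s : ℝ)|)
      ⊔ (⨆ s : Set.Icc (0:ℝ) 1, |cuu x (s : ℝ) - cuu y (s : ℝ)|)) ∈
      {c | ∃ r₁ u₁ r₂ u₂ : ℝ → ℝ, IsM1Rep x r₁ u₁ ∧ IsM1Rep y r₂ u₂ ∧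
        c = (⨆ s : Set.Icc (0:ℝ) 1, |r₁ (s : ℝ) - r₂ (s : ℝ)|)
          ⊔ (⨆ s : Set.Icc (0:ℝ) 1, |u₁ (s : ℝ) - u₂ (s : ℝ)|)} :=
    ⟨crr x, cuu x, crr y, cuu y, isM1Rep_canonical hx hmx, isM1Rep_canonical hy hmy, rfl⟩
  have hle := csInf_le ⟨0, dM1_set_nonneg⟩ hmem
  refine le_trans hle (sup_le ?_ ?_)
  · exact Real.iSup_le (fun s => h1 s s.2) hb0
  · exact Real.iSup_le (fun s => h2 s s.2) hb0

end Aux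


/-- the pointwise maximum `h(x,y) = x ∨ y` is continuous from
`D²_↑` with the weak `M₁` topology (coordinatewise `M₁` convergence) to `D¹_↑` with `M₁`. -/
theorem stmt7 (x y : ℕ → ℝ → ℝ) (x₀ y₀ : ℝ → ℝ)
    (hx : ∀ n, Cadlag (x n)) (hy : ∀ n, Cadlag (y n))
    (hx₀ : Cadlag x₀) (hy₀ : Cadlag y₀)
    (hmx : ∀ n, MonotoneOn (x n) (Set.Icc 0 1)) (hmy : ∀ n, MonotoneOn (y n) (Set.Icc 0 1))
    (hmx₀ : MonotoneOn x₀ (Set.Icc 0 1)) (hmy₀ : MonotoneOn y₀ (Set.Icc 0 1))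
    (hcx : Tendsto (fun n => dM1 (x n) x₀) atTop (nhds 0))
    (hcy : Tendsto (fun n => dM1 (y n) y₀) atTop (nhds 0)) :
    Tendsto (fun n => dM1 (fun t => x n t ⊔ y n t) (fun t => x₀ t ⊔ y₀ t)) atTop (nhds 0) := by
  have hI0 : (0:ℝ) ∈ Set.Icc (0:ℝ) 1 := ⟨le_rfl, zero_le_one⟩
  have hI1 : (1:ℝ) ∈ Set.Icc (0:ℝ) 1 := ⟨zero_le_one, le_rfl⟩
  have hcm : ∀ n, Cadlag (fun t => x n t ⊔ y n t) := fun n => cadlag_max (hx n) (hy n)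
  have hcm₀ : Cadlag (fun t => x₀ t ⊔ y₀ t) := cadlag_max hx₀ hy₀
  have hmm : ∀ n, MonotoneOn (fun t => x n t ⊔ y n t) (Set.Icc 0 1) :=
    fun n a ha b hb hab => sup_le_sup (hmx n ha hb hab) (hmy n ha hb hab)
  have hmm₀ : MonotoneOn (fun t => x₀ t ⊔ y₀ t) (Set.Icc 0 1) :=
    fun a ha b hb hab => sup_le_sup (hmx₀ ha hb hab) (hmy₀ ha hb hab)
  rw [Metric.tendsto_atTop] at hcx hcy ⊢
  intro ε hε
  set δ := ε / 6 with hδdef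
  have hδ : 0 < δ := by positivity
  obtain ⟨N₁, hN₁⟩ := hcx δ hδ
  obtain ⟨N₂, hN₂⟩ := hcy δ hδ
  refine ⟨max N₁ N₂, fun n hn => ?_⟩
  have hdx : dM1 (x n) x₀ < δ := by
    have := hN₁ n (le_trans (le_max_left _ _) hn)
    rw [Real.dist_eq, sub_zero] at this
    exact lt_of_le_of_lt (le_abs_self _) this
  have hdy : dM1 (y n) y₀ < δ := by
    have := hN₂ n (le_trans (le_max_right _ _) hn)
    rw [Real.dist_eq, sub_zero] at this
    exact lt_of_le_of_lt (le_abs_self _) this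
  obtain ⟨r₁, u₁, r₂, u₂, hX1, hX2, hbx⟩ :=
    dM1_lt_elim (hx n) (hmx n) hx₀ hmx₀ hdx
  obtain ⟨p₁, q₁, p₂, q₂, hY1, hY2, hby⟩ :=
    dM1_lt_elim (hy n) (hmy n) hy₀ hmy₀ hdy
  have hbx' : ∀ σ ∈ Set.Icc (0:ℝ) 1, |r₂ σ - r₁ σ| ≤ δ ∧ |u₂ σ - u₁ σ| ≤ δ := by
    intro σ hσ
    constructor
    · rw [abs_sub_comm]; exact (hbx σ hσ).1
    · rw [abs_sub_comm]; exact (hbx σ hσ).2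
  have hby' : ∀ σ ∈ Set.Icc (0:ℝ) 1, |p₂ σ - p₁ σ| ≤ δ ∧ |q₂ σ - q₁ σ| ≤ δ := by
    intro σ hσ
    constructor
    · rw [abs_sub_comm]; exact (hby σ hσ).1
    · rw [abs_sub_comm]; exact (hby σ hσ).2
  have hKx : ∀ s : ℝ, |Tf (x n) s - Tf x₀ s| ≤ 3 * δ := by
    intro s
    have h1 := Tf_le_of_close (hx n) (hmx n) hx₀ hmx₀ hδ.le hX1 hX2 hbx s
    have h2 := Tf_le_of_close hx₀ hmx₀ (hx n) (hmx n) hδ.le hX2 hX1 hbx' s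
    rw [abs_le]; constructor <;> linarith
  have hKy : ∀ s : ℝ, |Tf (y n) s - Tf y₀ s| ≤ 3 * δ := by
    intro s
    have h1 := Tf_le_of_close (hy n) (hmy n) hy₀ hmy₀ hδ.le hY1 hY2 hby s
    have h2 := Tf_le_of_close hy₀ hmy₀ (hy n) (hmy n) hδ.le hY2 hY1 hby' s
    rw [abs_le]; constructor <;> linarith
  -- endpoint differences
  have ex := rep_endpoints (hx n) (hmx n) hX1
  have ex₀ := rep_endpoints hx₀ hmx₀ hX2
  have ey := rep_endpoints (hy n) (hmy n) hY1
  have ey₀ := rep_endpoints hy₀ hmy₀ hY2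
  have hex0 : |x n 0 - x₀ 0| ≤ δ := by
    have := (hbx 0 hI0).2; rwa [ex.1, ex₀.1] at this
  have hex1 : |x n 1 - x₀ 1| ≤ δ := by
    have := (hbx 1 hI1).2; rwa [ex.2, ex₀.2] at this
  have hey0 : |y n 0 - y₀ 0| ≤ δ := by
    have := (hby 0 hI0).2; rwa [ey.1, ey₀.1] at this
  have hey1 : |y n 1 - y₀ 1| ≤ δ := by
    have := (hby 1 hI1).2; rwa [ey.2, ey₀.2] at this
  have hm0 : |(x n 0 ⊔ y n 0) - (x₀ 0 ⊔ y₀ 0)| ≤ δ :=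
    le_trans (abs_max_sub_max_le_max _ _ _ _) (max_le hex0 hey0)
  have hm1 : |(x n 1 ⊔ y n 1) - (x₀ 1 ⊔ y₀ 1)| ≤ δ :=
    le_trans (abs_max_sub_max_le_max _ _ _ _) (max_le hex1 hey1)
  -- the canonical representations of the maxima are close
  have hcrrb : ∀ σ ∈ Set.Icc (0:ℝ) 1,
      |crr (fun t => x n t ⊔ y n t) σ - crr (fun t => x₀ t ⊔ y₀ t) σ| ≤ 4 * δ := by
    intro σ hσ
    set s₁ := (x n 0 ⊔ y n 0) + σ * (1 + (x n 1 ⊔ y n 1) - (x n 0 ⊔ y n 0)) with hs₁def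
    set s₂ := (x₀ 0 ⊔ y₀ 0) + σ * (1 + (x₀ 1 ⊔ y₀ 1) - (x₀ 0 ⊔ y₀ 0)) with hs₂def
    have hs12 : |s₁ - s₂| ≤ δ := by
      have hrepr : s₁ - s₂ = (1 - σ) * ((x n 0 ⊔ y n 0) - (x₀ 0 ⊔ y₀ 0))
          + σ * ((x n 1 ⊔ y n 1) - (x₀ 1 ⊔ y₀ 1)) := by
        rw [hs₁def, hs₂def]; ring
      rw [hrepr]
      calc |(1 - σ) * ((x n 0 ⊔ y n 0) - (x₀ 0 ⊔ y₀ 0))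
          + σ * ((x n 1 ⊔ y n 1) - (x₀ 1 ⊔ y₀ 1))|
          ≤ |(1 - σ) * ((x n 0 ⊔ y n 0) - (x₀ 0 ⊔ y₀ 0))|
            + |σ * ((x n 1 ⊔ y n 1) - (x₀ 1 ⊔ y₀ 1))| := abs_add_le _ _
        _ = (1 - σ) * |(x n 0 ⊔ y n 0) - (x₀ 0 ⊔ y₀ 0)|
            + σ * |(x n 1 ⊔ y n 1) - (x₀ 1 ⊔ y₀ 1)| := by
            rw [abs_mul, abs_mul, abs_of_nonneg (by linarith [hσ.2]),
              abs_of_nonneg hσ.1]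
        _ ≤ (1 - σ) * δ + σ * δ := by
            have h1 := hσ.1
            have h2 := hσ.2
            gcongr <;> linarith
        _ = δ := by ring
    have hT1 : crr (fun t => x n t ⊔ y n t) σ = Tf (x n) s₁ ⊓ Tf (y n) s₁ := by
      rw [crr]
      exact Tf_max (hx n) (hy n) (hmx n) (hmy n) s₁
    have hT2 : crr (fun t => x₀ t ⊔ y₀ t) σ = Tf x₀ s₂ ⊓ Tf y₀ s₂ := by
      rw [crr]
      exact Tf_max hx₀ hy₀ hmx₀ hmy₀ s₂
    rw [hT1, hT2]
    have hstep1 : |Tf (x n) s₁ ⊓ Tf (y n) s₁ - Tf x₀ s₁ ⊓ Tf y₀ s₁| ≤ 3 * δ :=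
      le_trans (abs_min_sub_min_le_max _ _ _ _) (max_le (hKx s₁) (hKy s₁))
    have hstep2 : |Tf x₀ s₁ ⊓ Tf y₀ s₁ - Tf x₀ s₂ ⊓ Tf y₀ s₂| ≤ δ := by
      refine le_trans (abs_min_sub_min_le_max _ _ _ _) (max_le ?_ ?_)
      · exact le_trans (Tf_abs_lip hx₀ hmx₀ s₁ s₂) hs12
      · exact le_trans (Tf_abs_lip hy₀ hmy₀ s₁ s₂) hs12
    calc |Tf (x n) s₁ ⊓ Tf (y n) s₁ - Tf x₀ s₂ ⊓ Tf y₀ s₂|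
        ≤ |Tf (x n) s₁ ⊓ Tf (y n) s₁ - Tf x₀ s₁ ⊓ Tf y₀ s₁|
          + |Tf x₀ s₁ ⊓ Tf y₀ s₁ - Tf x₀ s₂ ⊓ Tf y₀ s₂| := abs_sub_le _ _ _
      _ ≤ 3 * δ + δ := add_le_add hstep1 hstep2
      _ = 4 * δ := by ring
  have hcuub : ∀ σ ∈ Set.Icc (0:ℝ) 1,
      |cuu (fun t => x n t ⊔ y n t) σ - cuu (fun t => x₀ t ⊔ y₀ t) σ| ≤ 5 * δ := by
    intro σ hσ
    have hcr := hcrrb σ hσ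
    set s₁ := (x n 0 ⊔ y n 0) + σ * (1 + (x n 1 ⊔ y n 1) - (x n 0 ⊔ y n 0)) with hs₁def
    set s₂ := (x₀ 0 ⊔ y₀ 0) + σ * (1 + (x₀ 1 ⊔ y₀ 1) - (x₀ 0 ⊔ y₀ 0)) with hs₂def
    have hs12 : |s₁ - s₂| ≤ δ := by
      have hrepr : s₁ - s₂ = (1 - σ) * ((x n 0 ⊔ y n 0) - (x₀ 0 ⊔ y₀ 0))
          + σ * ((x n 1 ⊔ y n 1) - (x₀ 1 ⊔ y₀ 1)) := by
        rw [hs₁def, hs₂def]; ring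
      rw [hrepr]
      calc |(1 - σ) * ((x n 0 ⊔ y n 0) - (x₀ 0 ⊔ y₀ 0))
          + σ * ((x n 1 ⊔ y n 1) - (x₀ 1 ⊔ y₀ 1))|
          ≤ |(1 - σ) * ((x n 0 ⊔ y n 0) - (x₀ 0 ⊔ y₀ 0))|
            + |σ * ((x n 1 ⊔ y n 1) - (x₀ 1 ⊔ y₀ 1))| := abs_add_le _ _
        _ = (1 - σ) * |(x n 0 ⊔ y n 0) - (x₀ 0 ⊔ y₀ 0)|
            + σ * |(x n 1 ⊔ y n 1) - (x₀ 1 ⊔ y₀ 1)| := by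
            rw [abs_mul, abs_mul, abs_of_nonneg (by linarith [hσ.2]),
              abs_of_nonneg hσ.1]
        _ ≤ (1 - σ) * δ + σ * δ := by
            have h1 := hσ.1
            have h2 := hσ.2
            gcongr <;> linarith
        _ = δ := by ring
    have he1 : cuu (fun t => x n t ⊔ y n t) σ = s₁ - crr (fun t => x n t ⊔ y n t) σ := rfl
    have he2 : cuu (fun t => x₀ t ⊔ y₀ t) σ = s₂ - crr (fun t => x₀ t ⊔ y₀ t) σ := rfl
    rw [he1, he2]
    have habs := abs_le.1 hs12
    have habs2 := abs_le.1 hcr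
    rw [abs_le]
    constructor <;> linarith [habs.1, habs.2, habs2.1, habs2.2]
  have hle : dM1 (fun t => x n t ⊔ y n t) (fun t => x₀ t ⊔ y₀ t) ≤ 5 * δ :=
    dM1_le_of_canonical (hcm n) (hmm n) hcm₀ hmm₀ (by positivity)
      (fun σ hσ => (hcrrb σ hσ).trans (by linarith)) hcuub
  have hge : 0 ≤ dM1 (fun t => x n t ⊔ y n t) (fun t => x₀ t ⊔ y₀ t) :=
    dM1_nonneg (hcm n) (hmm n) hcm₀ hmm₀
  rw [Real.dist_eq, sub_zero, abs_of_nonneg hge]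
  rw [hδdef] at hle
  linarith
end
end
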